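/- Abstract derivation relation (Theorem: Murahara): let Z : 𝔥¹ → R be a ℚ-linear map into a commutative ℚ-algebra R satisfying (i) Z(w ∗ w') = Z(w)Z(w'), (ii) Z(φ(w)) = Z(w) with φ(x) = x+y, φ(y) = −y, and (iii) Z(x^{l-1}y) = 0 for all l ≥ 1. Then for every l ≥ 1 and every w ∈ 𝔥¹, Z(∂_l(w)) = −Z(z^{l-1}y·w), where ∂_l is the derivation of 𝔥 with ∂_l(x) = xz^{l-1}y, ∂_l(y) = −xz^{l-1}y and z = x+y. -/
import Mathlib


noncomputable section

/-- 𝔥 = ℚ⟨x,y⟩. -/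
abbrev H : Type := FreeAlgebra ℚ (Fin 2)

/-- The generator x. -/
def Xg : H := FreeAlgebra.ι ℚ (0 : Fin 2)

/-- The generator y. -/
def Yg : H := FreeAlgebra.ι ℚ (1 : Fin 2)

/-- z = x + y. -/
def Zg : H := Xg + Yg

/-- Membership in 𝔥¹ = ℚ + 𝔥y. -/
def MemH1 (a : H) : Prop := ∃ (q : ℚ) (h : H), a = algebraMap ℚ H q + h * Yg

/-- The word z_{k₁}⋯z_{k_d} ∈ 𝔥¹, where z_k = x^{k-1}y. -/
def zword (K : List ℕ+) : H := (K.map fun k => Xg ^ ((k : ℕ) - 1) * Yg).prod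

/-- The harmonic product of two words of 𝔥¹, landing in 𝔥¹ ⊆ 𝔥. -/
def hmulF : List ℕ+ → List ℕ+ → H
  | [], L => zword L
  | K, [] => zword K
  | k :: K, l :: L =>
      Xg ^ ((k : ℕ) - 1) * Yg * hmulF K (l :: L)
      + Xg ^ ((l : ℕ) - 1) * Yg * hmulF (k :: K) L
      + Xg ^ (((k : ℕ) + (l : ℕ)) - 1) * Yg * hmulF K L
termination_by K L => K.length + L.length

/-- The automorphism φ of ℚ⟨x,y⟩ with φ(x) = x + y and φ(y) = -y. -/
def phi : H →ₐ[ℚ] H := FreeAlgebra.lift ℚ (fun i : Fin 2 => if i = 0 then Xg + Yg else -Yg)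

/-- The product z^{m₁-1}y ⋯ z^{m_s-1}y. -/
def zy (ms : List ℕ+) : H := (ms.map fun m => Zg ^ ((m : ℕ) - 1) * Yg).prod

-- basic phi facts
lemma phi_X : phi Xg = Xg + Yg := by simp [phi, Xg, Yg]
lemma phi_Y : phi Yg = -Yg := by simp [phi, Xg, Yg]
lemma phi_Z : phi Zg = Xg := by simp [Zg, map_add, phi_X, phi_Y]
lemma phi_phi : ∀ a : H, phi (phi a) = a := by
  have : phi.comp phi = AlgHom.id ℚ H := by
    apply FreeAlgebra.hom_ext
    funext i
    fin_cases i <;>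
      simp [AlgHom.comp_apply, show FreeAlgebra.ι ℚ (0:Fin 2) = Xg from rfl,
        show FreeAlgebra.ι ℚ (1:Fin 2) = Yg from rfl, phi_X, phi_Y, map_add]
  intro a
  exact DFunLike.congr_fun this a

-- derivation machinery via TrivSqZeroExt
def Psi (c : H) : H →ₐ[ℚ] TrivSqZeroExt H H :=
  FreeAlgebra.lift ℚ (fun i : Fin 2 =>
    if i = 0 then TrivSqZeroExt.inl Xg else TrivSqZeroExt.inl Yg + TrivSqZeroExt.inr c)

def Ed (c : H) (a : H) : H := (Psi c a).snd

lemma Psi_fst (c : H) : ∀ a : H, (Psi c a).fst = a := by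
  have : (TrivSqZeroExt.fstHom ℚ H H).comp (Psi c) = AlgHom.id ℚ H := by
    apply FreeAlgebra.hom_ext
    funext i
    fin_cases i <;> simp [Psi, Xg, Yg]
  intro a
  exact DFunLike.congr_fun this a

lemma Ed_mul (c a b : H) : Ed c (a * b) = Ed c a * b + a * Ed c b := by
  unfold Ed
  rw [map_mul, TrivSqZeroExt.snd_mul, Psi_fst, Psi_fst]
  simp [MulOpposite.op_smul]
  simp [add_comm]
lemma Ed_add (c a b : H) : Ed c (a + b) = Ed c a + Ed c b := by
  unfold Ed; rw [map_add, TrivSqZeroExt.snd_add]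
lemma Ed_smul (c : H) (q : ℚ) (a : H) : Ed c (q • a) = q • Ed c a := by
  unfold Ed; rw [map_smul, TrivSqZeroExt.snd_smul]
lemma Ed_X (c : H) : Ed c Xg = 0 := by simp [Ed, Psi, Xg]
lemma Ed_Y (c : H) : Ed c Yg = c := by simp [Ed, Psi, Yg]
lemma Ed_algebraMap (c : H) (q : ℚ) : Ed c (algebraMap ℚ H q) = 0 := by
  simp [Ed, AlgHom.commutes, TrivSqZeroExt.algebraMap_eq_inl']
lemma Ed_one (c : H) : Ed c 1 = 0 := by simp [Ed]
lemma Ed_neg (c a : H) : Ed c (-a) = -Ed c a := by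
  unfold Ed; rw [map_neg, TrivSqZeroExt.snd_neg]
lemma Ed_powX (c : H) (n : ℕ) : Ed c (Xg ^ n) = 0 := by
  induction n with
  | zero => simpa using Ed_one c
  | succ n ih => rw [pow_succ, Ed_mul, ih, Ed_X]; simp

lemma zword_nil : zword [] = 1 := rfl
lemma zword_cons (k : ℕ+) (K : List ℕ+) :
    zword (k :: K) = Xg ^ ((k : ℕ) - 1) * Yg * zword K := by
  simp [zword, List.prod_cons]

lemma hmulF_nil_right (K : List ℕ+) : hmulF K [] = zword K := by
  cases K <;> simp [hmulF]
lemma hmulF_nil_left (L : List ℕ+) : hmulF [] L = zword L := by simp [hmulF]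
lemma hmulF_single_cons (l k : ℕ+) (K : List ℕ+) :
    hmulF [l] (k :: K) =
      Xg ^ ((l : ℕ) - 1) * Yg * zword (k :: K)
      + Xg ^ ((k : ℕ) - 1) * Yg * hmulF [l] K
      + Xg ^ (((l : ℕ) + (k : ℕ)) - 1) * Yg * zword K := by
  rw [show ([l] : List ℕ+) = l :: [] from rfl, hmulF, hmulF_nil_left, hmulF_nil_left]

lemma exp_arith (k l : ℕ+) : ((k:ℕ) - 1) + 1 + ((l:ℕ) - 1) = ((k:ℕ) + (l:ℕ)) - 1 := by
  have hk : 0 < (k:ℕ) := k.pos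
  have hl : 0 < (l:ℕ) := l.pos
  omega

lemma Ed_zk (l k : ℕ+) :
    Ed (Zg * Xg ^ ((l:ℕ) - 1) * Yg) (Xg ^ ((k:ℕ) - 1) * Yg)
      = Xg ^ (((k:ℕ) + (l:ℕ)) - 1) * Yg
        + (Xg ^ ((k:ℕ) - 1) * Yg) * (Xg ^ ((l:ℕ) - 1) * Yg) := by
  rw [Ed_mul, Ed_powX, Ed_Y, Zg]
  rw [zero_mul, zero_add]
  rw [show Xg ^ ((k:ℕ) - 1) * ((Xg + Yg) * Xg ^ ((l:ℕ) - 1) * Yg)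
      = Xg ^ (((k:ℕ)-1) + 1 + ((l:ℕ)-1)) * Yg + Xg ^ ((k:ℕ)-1) * Yg * (Xg ^ ((l:ℕ)-1) * Yg) by
    rw [pow_add, pow_add, pow_one]; noncomm_ring]
  rw [exp_arith]

lemma Ed_stuffle (l : ℕ+) : ∀ K : List ℕ+,
    Ed (Zg * Xg ^ ((l:ℕ) - 1) * Yg) (zword K)
      = hmulF [l] K - Xg ^ ((l:ℕ) - 1) * Yg * zword K := by
  intro K
  induction K with
  | nil =>
      rw [zword_nil, Ed_one, hmulF_nil_right]
      simp [zword_cons, zword_nil]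
  | cons k K ih =>
      rw [zword_cons, Ed_mul, Ed_zk, ih, hmulF_single_cons, zword_cons]
      rw [show ((l:ℕ) + (k:ℕ)) - 1 = ((k:ℕ) + (l:ℕ)) - 1 by omega]
      noncomm_ring

def S1 : Submodule ℚ H := Submodule.span ℚ (Set.range (fun p : ℕ+ × List ℕ+ => zword (p.1 :: p.2)))
def S0 : Submodule ℚ H := Submodule.span ℚ (Set.range zword)

lemma zword_mem_S1 (k : ℕ+) (K : List ℕ+) : zword (k :: K) ∈ S1 :=
  Submodule.subset_span ⟨(k, K), rfl⟩

lemma mul_zword_mem : ∀ h : H, ∀ (k : ℕ+) (K : List ℕ+), h * zword (k :: K) ∈ S1 := by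
  intro h
  induction h using FreeAlgebra.induction with
  | grade0 q =>
      intro k K
      rw [Algebra.algebraMap_eq_smul_one, smul_mul_assoc, one_mul]
      exact S1.smul_mem _ (zword_mem_S1 k K)
  | grade1 i =>
      intro k K
      fin_cases i
      · show Xg * zword (k :: K) ∈ S1
        rw [zword_cons, ← mul_assoc, ← mul_assoc]
        have : Xg * Xg ^ ((k:ℕ) - 1) = Xg ^ (((k+1 : ℕ+):ℕ) - 1) := by
          rw [← pow_succ']
          congr 1
          have := k.pos
          push_cast
          omega
        rw [this, ← zword_cons]
        exact zword_mem_S1 _ _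
      · show Yg * zword (k :: K) ∈ S1
        rw [show Yg = Xg ^ (((1 : ℕ+):ℕ) - 1) * Yg by simp, ← zword_cons]
        exact zword_mem_S1 _ _
  | mul a b ha hb =>
      intro k K
      rw [mul_assoc]
      have hmem := hb k K
      refine Submodule.span_induction ?_ ?_ ?_ ?_ hmem
      · rintro s ⟨⟨k', K'⟩, rfl⟩
        exact ha k' K'
      · simp
      · intro s t _ _ hs ht
        rw [mul_add]; exact S1.add_mem hs ht
      · intro q s _ hs
        rw [mul_smul_comm]; exact S1.smul_mem _ hs
  | add a b ha hb =>
      intro k K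
      rw [add_mul]
      exact S1.add_mem (ha k K) (hb k K)

lemma memH1_mem_S0 (w : H) (hw : MemH1 w) : w ∈ S0 := by
  obtain ⟨q, h, rfl⟩ := hw
  apply S0.add_mem
  · rw [Algebra.algebraMap_eq_smul_one, show (1 : H) = zword [] from rfl]
    exact S0.smul_mem _ (Submodule.subset_span ⟨[], rfl⟩)
  · have : h * Yg = h * zword [1] := by simp [zword]
    rw [this]
    have h1 := mul_zword_mem h 1 []
    refine Submodule.span_le.mpr ?_ h1
    rintro s ⟨⟨k', K'⟩, rfl⟩
    exact Submodule.subset_span ⟨k' :: K', rfl⟩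

lemma Ed_zero (c : H) : Ed c 0 = 0 := by unfold Ed; rw [map_zero]; rfl

lemma memH1_phi (w : H) (hw : MemH1 w) : MemH1 (phi w) := by
  obtain ⟨q, h, rfl⟩ := hw
  refine ⟨q, -(phi h), ?_⟩
  rw [map_add, map_mul, phi_Y, AlgHom.commutes, mul_neg, neg_mul]

lemma memH1_Ed (l : ℕ+) (w : H) (hw : MemH1 w) :
    MemH1 (Ed (Zg * Xg ^ ((l:ℕ) - 1) * Yg) w) := by
  obtain ⟨q, h, rfl⟩ := hw
  refine ⟨0, Ed (Zg * Xg ^ ((l:ℕ) - 1) * Yg) h + h * (Zg * Xg ^ ((l:ℕ) - 1)), ?_⟩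
  rw [Ed_add, Ed_algebraMap, Ed_mul, Ed_Y, map_zero]
  noncomm_ring

lemma phiDphi (l : ℕ+) (D : H →ₗ[ℚ] H)
    (hD : ∀ a b : H, D (a * b) = D a * b + a * D b)
    (hx : D Xg = Xg * Zg ^ ((l : ℕ) - 1) * Yg)
    (hy : D Yg = -(Xg * Zg ^ ((l : ℕ) - 1) * Yg)) :
    ∀ a : H, phi (D (phi a)) = -(Ed (Zg * Xg ^ ((l:ℕ) - 1) * Yg) a) := by
  have hD1 : D 1 = 0 := by
    have h := hD 1 1
    rw [mul_one, mul_one, one_mul] at h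
    have h2 : D 1 + D 1 = D 1 + 0 := by rw [add_zero]; exact h.symm
    exact add_left_cancel h2
  intro a
  induction a using FreeAlgebra.induction with
  | grade0 q =>
      rw [AlgHom.commutes, Algebra.algebraMap_eq_smul_one, map_smul, hD1, smul_zero, map_zero,
        Ed_smul, Ed_one, smul_zero, neg_zero]
  | grade1 i =>
      fin_cases i
      · show phi (D (phi Xg)) = -(Ed (Zg * Xg ^ ((l:ℕ) - 1) * Yg) Xg)
        rw [phi_X, map_add, hx, hy, add_neg_cancel, map_zero, Ed_X, neg_zero]
      · show phi (D (phi Yg)) = -(Ed (Zg * Xg ^ ((l:ℕ) - 1) * Yg) Yg)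
        rw [phi_Y, map_neg, hy, neg_neg, map_mul, map_mul, map_pow, phi_X, phi_Z, phi_Y, Ed_Y,
          show Zg = Xg + Yg from rfl]
        noncomm_ring
  | mul a b ha hb =>
      rw [map_mul, hD, map_add, map_mul, map_mul, phi_phi, phi_phi, ha, hb, Ed_mul]
      noncomm_ring
  | add a b ha hb =>
      rw [map_add, map_add, map_add, ha, hb, Ed_add]
      noncomm_ring

lemma zword_single (l : ℕ+) : zword [l] = Xg ^ ((l:ℕ) - 1) * Yg := by simp [zword]


/-- Derivation relations for finite multiple zeta values (Murahara), abstract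
form: for any ℚ-linear Z : 𝔥¹ → R into a commutative ℚ-algebra satisfying the
harmonic product rule, duality Z∘φ = Z, and Z(x^{l-1}y) = 0 for all l ≥ 1, and
for the derivation ∂_l of 𝔥 with ∂_l(x) = xz^{l-1}y, ∂_l(y) = −xz^{l-1}y, one
has Z(∂_l(w)) = −Z(z^{l-1}y·w) for all w ∈ 𝔥¹. -/
theorem abstract_derivation_relation (R : Type*) [CommRing R] [Algebra ℚ R]
    (Zm : H →ₗ[ℚ] R)
    (hharm : ∀ K L : List ℕ+, Zm (hmulF K L) = Zm (zword K) * Zm (zword L))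
    (hdual : ∀ a : H, MemH1 a → Zm (phi a) = Zm a)
    (hdepth1 : ∀ l : ℕ+, Zm (Xg ^ ((l : ℕ) - 1) * Yg) = 0)
    (l : ℕ+) (D : H →ₗ[ℚ] H)
    (hD : ∀ a b : H, D (a * b) = D a * b + a * D b)
    (hx : D Xg = Xg * Zg ^ ((l : ℕ) - 1) * Yg)
    (hy : D Yg = -(Xg * Zg ^ ((l : ℕ) - 1) * Yg))
    (w : H) (hw : MemH1 w) :
    Zm (D w) = -(Zm (Zg ^ ((l : ℕ) - 1) * Yg * w)) := by
  set c : H := Zg * Xg ^ ((l:ℕ) - 1) * Yg with hc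
  -- D maps 𝔥¹ to 𝔥¹
  have hD1 : D 1 = 0 := by
    have h := hD 1 1
    rw [mul_one, mul_one, one_mul] at h
    have h2 : D 1 + D 1 = D 1 + 0 := by rw [add_zero]; exact h.symm
    exact add_left_cancel h2
  have memH1_D : MemH1 (D w) := by
    obtain ⟨q, h, rfl⟩ := hw
    refine ⟨0, D h - h * (Xg * Zg ^ ((l:ℕ) - 1)), ?_⟩
    rw [map_add, Algebra.algebraMap_eq_smul_one q, map_smul, hD1, smul_zero, hD h Yg, hy,
      map_zero]
    noncomm_ring
  -- Zg^{l-1} Yg w ∈ 𝔥¹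
  have memH1_zlw : MemH1 (Zg ^ ((l:ℕ) - 1) * Yg * w) := by
    obtain ⟨q, h, rfl⟩ := hw
    refine ⟨0, algebraMap ℚ H q * Zg ^ ((l:ℕ) - 1) + Zg ^ ((l:ℕ) - 1) * Yg * h, ?_⟩
    have hcm : Zg ^ ((l:ℕ) - 1) * Yg * algebraMap ℚ H q
        = algebraMap ℚ H q * (Zg ^ ((l:ℕ) - 1) * Yg) := (Algebra.commutes q _).symm
    rw [map_zero, zero_add, mul_add, hcm]
    noncomm_ring
  -- key computation on the span of zwords
  have key : ∀ v ∈ S0, Zm (Ed c v) = -(Zm (Xg ^ ((l:ℕ) - 1) * Yg * v)) := by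
    intro v hv
    refine Submodule.span_induction ?_ ?_ ?_ ?_ hv
    · rintro s ⟨K, rfl⟩
      rw [hc, Ed_stuffle, map_sub, hharm [l] K, zword_single, hdepth1 l, zero_mul, zero_sub]
    · rw [Ed_zero, map_zero, mul_zero, map_zero, neg_zero]
    · intro s t _ _ hs ht
      rw [Ed_add, map_add, hs, ht, mul_add, map_add]
      ring
    · intro q s _ hs
      rw [Ed_smul, map_smul, hs, mul_smul_comm, map_smul, smul_neg]
  -- assembly
  have h2 : phi (D w) = -(Ed c (phi w)) := by
    have h := phiDphi l D hD hx hy (phi w)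
    rwa [phi_phi w] at h
  have h4 : Xg ^ ((l:ℕ) - 1) * Yg * phi w = -(phi (Zg ^ ((l:ℕ) - 1) * Yg * w)) := by
    rw [map_mul, map_mul, map_pow, phi_Z, phi_Y]
    noncomm_ring
  calc Zm (D w) = Zm (phi (D w)) := (hdual _ memH1_D).symm
    _ = -(Zm (Ed c (phi w))) := by rw [h2, map_neg]
    _ = Zm (Xg ^ ((l:ℕ) - 1) * Yg * phi w) := by
        rw [key (phi w) (memH1_mem_S0 _ (memH1_phi w hw)), neg_neg]
    _ = -(Zm (phi (Zg ^ ((l:ℕ) - 1) * Yg * w))) := by rw [h4, map_neg]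
    _ = -(Zm (Zg ^ ((l:ℕ) - 1) * Yg * w)) := by rw [hdual _ memH1_zlw]

end
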